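/- Let (Ω, F, P) be a probability space, let d ≥ 1 and m ≥ 0 be integers, and let X_0, X_1, …, X_m : Ω → ℝ^d be integrable random vectors. Let J : Ω → ℕ be a random variable, independent of (X_0, …, X_m), with P(J = j) = 2^{−j} for every integer j ≥ 1. Define the multilevel Monte Carlo estimator G := X_0 + 2^J·(X_J − X_{J−1}) on the event {1 ≤ J ≤ m}, and G := X_0 on the event {J > m}. Then E[G] = E[X_m]. -/

import Mathlib

open MeasureTheory ProbabilityTheory

lemma mlmc_key {Ω : Type*} [MeasurableSpace Ω] (P : Measure Ω)
    [IsProbabilityMeasure P] {d m : ℕ}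
    (X : ℕ → Ω → EuclideanSpace ℝ (Fin d))
    (hXmeas : ∀ j, Measurable (X j))
    (hXint : ∀ j ≤ m, Integrable (X j) P)
    (J : Ω → ℕ) (hJmeas : Measurable J)
    (hindep : IndepFun J (fun ω (i : Fin (m + 1)) => X i ω) P)
    (j : ℕ) (hj1 : 1 ≤ j) (hjm : j ≤ m) :
    ∫ ω in {ω | J ω = j}, (X j ω - X (j - 1) ω) ∂P
      = (P {ω | J ω = j}).toReal • ∫ ω, (X j ω - X (j - 1) ω) ∂P := by
  have hA : MeasurableSet {ω | J ω = j} := hJmeas (measurableSet_singleton j)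
  have hYint : Integrable (fun ω => X j ω - X (j - 1) ω) P :=
    (hXint j hjm).sub (hXint (j - 1) (le_trans (Nat.sub_le j 1) hjm))
  ext i
  have hproj := (EuclideanSpace.proj (𝕜 := ℝ) i)
  -- coordinate functions
  set g : Ω → ℝ := fun ω => EuclideanSpace.proj (𝕜 := ℝ) i (X j ω - X (j - 1) ω) with hg
  have hgint : Integrable g P := (EuclideanSpace.proj (𝕜 := ℝ) i).integrable_comp hYint
  have hL : (∫ ω in {ω | J ω = j}, (X j ω - X (j - 1) ω) ∂P) i
      = ∫ ω in {ω | J ω = j}, g ω ∂P :=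
    ((EuclideanSpace.proj (𝕜 := ℝ) i).integral_comp_comm hYint.integrableOn).symm
  have hR : (∫ ω, (X j ω - X (j - 1) ω) ∂P) i = ∫ ω, g ω ∂P :=
    ((EuclideanSpace.proj (𝕜 := ℝ) i).integral_comp_comm hYint).symm
  have hsmul : ((P {ω | J ω = j}).toReal • ∫ ω, (X j ω - X (j - 1) ω) ∂P) i
      = (P {ω | J ω = j}).toReal * ∫ ω, g ω ∂P := by
    rw [PiLp.smul_apply, hR, smul_eq_mul]
  rw [hL, hsmul]
  -- now real-valued statement via independence
  set f : Ω → ℝ := fun ω => if J ω = j then 1 else 0 with hf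
  have hfind : IndepFun f g P := by
    have hφ : Measurable (fun n : ℕ => if n = j then (1 : ℝ) else 0) :=
      measurable_from_top
    have hψ : Measurable (fun v : Fin (m + 1) → EuclideanSpace ℝ (Fin d) =>
        EuclideanSpace.proj (𝕜 := ℝ) i (v ⟨j, by omega⟩ - v ⟨j - 1, by omega⟩)) :=
      (EuclideanSpace.proj (𝕜 := ℝ) i).continuous.measurable.comp
        ((measurable_pi_apply _).sub (measurable_pi_apply _))
    have := hindep.comp hφ hψ
    convert this using 2
    all_goals rfl
  have hfint : Integrable f P := by
    have : f = Set.indicator {ω | J ω = j} (fun _ => (1 : ℝ)) := by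
      funext ω
      by_cases h : J ω = j <;> simp [hf, h, Set.indicator_apply]
    rw [this]
    exact (integrable_const (1 : ℝ)).indicator hA
  have hmul := hfind.integral_mul_eq_mul_integral hfint.aestronglyMeasurable hgint.aestronglyMeasurable
  have hfint' : ∫ ω, f ω ∂P = (P {ω | J ω = j}).toReal := by
    have : f = Set.indicator {ω | J ω = j} (fun _ => (1 : ℝ)) := by
      funext ω
      by_cases h : J ω = j <;> simp [hf, h, Set.indicator_apply]
    rw [this, integral_indicator_const (1 : ℝ) hA, smul_eq_mul, mul_one, Measure.real]
  have hind : ∫ ω in {ω | J ω = j}, g ω ∂P = ∫ ω, f ω * g ω ∂P := by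
    rw [← integral_indicator hA]
    congr 1
    funext ω
    by_cases h : J ω = j <;> simp [hf, h, Set.indicator_apply]
  rw [hind]
  have : ∫ ω, f ω * g ω ∂P = (∫ ω, f ω ∂P) * ∫ ω, g ω ∂P := hmul
  rw [this, hfint']

theorem mlmc_unbiased {Ω : Type*} [MeasurableSpace Ω] (P : Measure Ω)
    [IsProbabilityMeasure P] (d m : ℕ) (hd : 1 ≤ d)
    (X : ℕ → Ω → EuclideanSpace ℝ (Fin d))
    (hXmeas : ∀ j, Measurable (X j))
    (hXint : ∀ j ≤ m, Integrable (X j) P)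
    (J : Ω → ℕ) (hJmeas : Measurable J)
    (hindep : IndepFun J (fun ω (i : Fin (m + 1)) => X i ω) P)
    (hJlaw : ∀ j : ℕ, 1 ≤ j → P {ω | J ω = j} = (1 / 2 : ENNReal) ^ j) :
    ∫ ω, (if 1 ≤ J ω ∧ J ω ≤ m then
        X 0 ω + ((2 : ℝ) ^ J ω) • (X (J ω) ω - X (J ω - 1) ω)
      else X 0 ω) ∂P = ∫ ω, X m ω ∂P := by
  have hA : ∀ j : ℕ, MeasurableSet {ω | J ω = j} :=
    fun j => hJmeas (measurableSet_singleton j)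
  have hYint : ∀ j ∈ Finset.Icc 1 m,
      Integrable (fun ω => ((2 : ℝ) ^ j) • (X j ω - X (j - 1) ω)) P := by
    intro j hj
    rw [Finset.mem_Icc] at hj
    exact (((hXint j hj.2).sub (hXint (j - 1) (le_trans (Nat.sub_le j 1) hj.2)))).smul ((2 : ℝ) ^ j)
  -- rewrite the integrand
  have hfun : (fun ω => if 1 ≤ J ω ∧ J ω ≤ m then
        X 0 ω + ((2 : ℝ) ^ J ω) • (X (J ω) ω - X (J ω - 1) ω) else X 0 ω)
      = fun ω => X 0 ω + ∑ j ∈ Finset.Icc 1 m,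
          Set.indicator {ω | J ω = j}
            (fun ω => ((2 : ℝ) ^ j) • (X j ω - X (j - 1) ω)) ω := by
    funext ω
    by_cases h : 1 ≤ J ω ∧ J ω ≤ m
    · rw [if_pos h]
      congr 1
      rw [Finset.sum_eq_single_of_mem (J ω) (Finset.mem_Icc.mpr h)]
      · simp [Set.indicator_apply]
      · intro b _ hb
        simp [Set.indicator_apply, fun hh : J ω = b => hb hh.symm]
        intro hh; exact absurd hh.symm hb
    · rw [if_neg h]
      rw [Finset.sum_eq_zero, add_zero]
      intro b hb
      rw [Finset.mem_Icc] at hb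
      apply Set.indicator_of_notMem
      intro hm
      rw [Set.mem_setOf_eq] at hm
      exact h ⟨by omega, by omega⟩
  rw [hfun]
  rw [integral_add (hXint 0 (Nat.zero_le m)) (integrable_finset_sum _
    (fun j hj => ((hYint j hj)).indicator (hA j)))]
  rw [integral_finset_sum _ (fun j hj => ((hYint j hj)).indicator (hA j))]
  have hterm : ∀ j ∈ Finset.Icc 1 m,
      ∫ ω, Set.indicator {ω | J ω = j}
          (fun ω => ((2 : ℝ) ^ j) • (X j ω - X (j - 1) ω)) ω ∂P
        = (∫ ω, X j ω ∂P) - ∫ ω, X (j - 1) ω ∂P := by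
    intro j hj
    rw [Finset.mem_Icc] at hj
    rw [integral_indicator (hA j)]
    have : ∫ ω in {ω | J ω = j}, ((2 : ℝ) ^ j) • (X j ω - X (j - 1) ω) ∂P
        = ((2 : ℝ) ^ j) • ∫ ω in {ω | J ω = j}, (X j ω - X (j - 1) ω) ∂P :=
      integral_smul _ _
    rw [this, mlmc_key P X hXmeas hXint J hJmeas hindep j hj.1 hj.2]
    rw [hJlaw j hj.1]
    rw [smul_smul]
    have h2 : ((2 : ℝ) ^ j) * ((1 / 2 : ENNReal) ^ j).toReal = 1 := by
      rw [ENNReal.toReal_pow]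
      norm_num
      rw [← mul_pow]
      norm_num
    rw [h2, one_smul]
    exact integral_sub (hXint j hj.2) (hXint (j - 1) (le_trans (Nat.sub_le j 1) hj.2))
  rw [Finset.sum_congr rfl hterm]
  have htel : ∑ j ∈ Finset.Icc 1 m, ((∫ ω, X j ω ∂P) - ∫ ω, X (j - 1) ω ∂P)
      = (∫ ω, X m ω ∂P) - ∫ ω, X 0 ω ∂P := by
    rw [← Finset.Ico_add_one_right_eq_Icc, Finset.sum_Ico_eq_sum_range]
    have : ∀ i ∈ Finset.range (m + 1 - 1), ((∫ ω, X (1 + i) ω ∂P) - ∫ ω, X (1 + i - 1) ω ∂P)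
        = (∫ ω, X (i + 1) ω ∂P) - ∫ ω, X i ω ∂P := by
      intro i _
      rw [show 1 + i = i + 1 from Nat.add_comm 1 i, Nat.add_sub_cancel]
    rw [Finset.sum_congr rfl this, show m + 1 - 1 = m from rfl,
      Finset.sum_range_sub (fun k => ∫ ω, X k ω ∂P)]
  rw [htel]
  abel
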